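/- Let {a_n}, {z_n}, {y_n} be sequences of nonnegative reals with a_{n+1} ≤ (1 + z_n)·a_n + y_n for all n. If ∑ z_n < ∞ and ∑ y_n < ∞, then lim_{n→∞} a_n exists. -/

import Mathlib

open Filter

theorem stmt9 (a z y : ℕ → ℝ)
    (ha : ∀ n, 0 ≤ a n) (hz : ∀ n, 0 ≤ z n) (hy : ∀ n, 0 ≤ y n)
    (h : ∀ n, a (n + 1) ≤ (1 + z n) * a n + y n)
    (hzs : Summable z) (hys : Summable y) :
    ∃ l : ℝ, Tendsto a atTop (nhds l) := by
  set P : ℕ → ℝ := fun n => ∏ k ∈ Finset.range n, (1 + z k) with hPdef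
  have hPsucc0 : ∀ n, P (n + 1) = P n * (1 + z n) := by
    intro n; simp [hPdef, Finset.prod_range_succ]
  have hP1 : ∀ n, 1 ≤ P n := by
    intro n
    induction n with
    | zero => simp [hPdef]
    | succ m ih =>
      rw [hPsucc0 m]
      nlinarith [hz m]
  have hPpos : ∀ n, 0 < P n := fun n => lt_of_lt_of_le one_pos (hP1 n)
  have hPsucc : ∀ n, P (n + 1) = P n * (1 + z n) := by
    intro n; simp [hPdef, Finset.prod_range_succ]
  have hPmono : Monotone P := by
    apply monotone_nat_of_le_succ
    intro n
    rw [hPsucc n]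
    nlinarith [hPpos n, hz n]
  have hPbound : ∀ n, P n ≤ Real.exp (∑' k, z k) := by
    intro n
    calc P n ≤ ∏ k ∈ Finset.range n, Real.exp (z k) := by
          apply Finset.prod_le_prod
          · intro k _; linarith [hz k]
          · intro k _; linarith [Real.add_one_le_exp (z k)]
      _ = Real.exp (∑ k ∈ Finset.range n, z k) := by rw [Real.exp_sum]
      _ ≤ Real.exp (∑' k, z k) := by
          apply Real.exp_le_exp.mpr
          exact Summable.sum_le_tsum _ (fun k _ => hz k) hzs
  -- P converges
  have hPconv : ∃ lP : ℝ, Tendsto P atTop (nhds lP) := by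
    refine ⟨⨆ n, P n, tendsto_atTop_ciSup hPmono ⟨Real.exp (∑' k, z k), ?_⟩⟩
    rintro x ⟨n, rfl⟩; exact hPbound n
  obtain ⟨lP, hlP⟩ := hPconv
  set S : ℕ → ℝ := fun n => ∑ k ∈ Finset.range n, y k with hSdef
  have hSconv : Tendsto S atTop (nhds (∑' k, y k)) := hys.hasSum.tendsto_sum_nat
  set b : ℕ → ℝ := fun n => a n / P n - S n with hbdef
  have hbanti : Antitone b := by
    apply antitone_nat_of_succ_le
    intro n
    have hkey : a (n + 1) / P (n + 1) ≤ a n / P n + y n := by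
      have h1 : a (n + 1) / P (n + 1) ≤ ((1 + z n) * a n + y n) / P (n + 1) :=
        by gcongr; exacts [(hPpos (n + 1)).le, h n]
      calc a (n + 1) / P (n + 1) ≤ ((1 + z n) * a n + y n) / P (n + 1) := h1
        _ = a n / P n + y n / P (n + 1) := by
            have hz1 : (0:ℝ) < 1 + z n := by linarith [hz n]
            rw [hPsucc n]
            rw [show a n / P n = (1 + z n) * a n / (P n * (1 + z n)) by
              rw [mul_comm (1 + z n) (a n)]
              exact (mul_div_mul_right _ _ hz1.ne').symm]
            rw [← add_div]
        _ ≤ a n / P n + y n := by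
            have : y n / P (n + 1) ≤ y n := by
              apply div_le_self (hy n) (hP1 (n + 1))
            linarith
    simp only [hbdef, hSdef, Finset.sum_range_succ]
    linarith
  have hbbdd : BddBelow (Set.range b) := by
    refine ⟨-(∑' k, y k), ?_⟩
    rintro x ⟨n, rfl⟩
    have h1 : 0 ≤ a n / P n := div_nonneg (ha n) (hPpos n).le
    have h2 : S n ≤ ∑' k, y k := Summable.sum_le_tsum _ (fun k _ => hy k) hys
    simp only [hbdef]
    linarith
  have hbconv : Tendsto b atTop (nhds (⨅ n, b n)) := tendsto_atTop_ciInf hbanti hbbdd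
  refine ⟨((⨅ n, b n) + ∑' k, y k) * lP, ?_⟩
  have : a = fun n => (b n + S n) * P n := by
    funext n
    simp only [hbdef]
    rw [sub_add_cancel, div_mul_cancel₀ _ (hPpos n).ne']
  rw [this]
  exact ((hbconv.add hSconv).mul hlP)
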